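/- arXiv:1512.08904 — 2 statements merged into one kernel-verified Lean document; each statement's English description precedes it below -/
import Mathlib

section
/- Let p be a prime, C ⊂ ℚ_p a finite set, and ξ ∈ ℚ_p nonzero such that ∑_{c∈C} χ(ξ c) = 0, where χ is the standard additive character of ℚ_p. Then for every c ∈ C there exists c' ∈ C with c' ≠ c and |c - c'|_p = p/|ξ|_p. -/
open Polynomial

/-- The standard additive character `χ(x) = e^{2πi {x}}` of `ℚ_[p]`, where `{x}` is the
p-adic fractional part of `x`. -/
noncomputable def stdChar (p : ℕ) [hp : Fact p.Prime] (x : ℚ_[p]) : ℂ :=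
  let n : ℕ := (-x.valuation).toNat
  let y : ℤ_[p] := ⟨(p : ℚ_[p]) ^ n * x, by
    by_cases hx : x = 0
    · simp [hx]
    · rw [norm_mul, norm_pow, Padic.norm_p, Padic.norm_eq_zpow_neg_valuation hx]
      have h1 : (1:ℝ) < p := by exact_mod_cast hp.out.one_lt
      have h0 : (0:ℝ) < p := by positivity
      rw [inv_pow, ← zpow_natCast, ← zpow_neg, ← zpow_add₀ (ne_of_gt h0)]
      apply zpow_le_one_of_nonpos₀ h1.le
      have h2 : -x.valuation ≤ ((-x.valuation).toNat : ℤ) := Int.self_le_toNat _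
      omega⟩
  Complex.exp (2 * Real.pi * Complex.I * ((y.appr n : ℂ) / (p : ℂ) ^ n))

lemma exp_rep_eq (p : ℕ) [hp : Fact p.Prime] (x : ℚ_[p]) (a b : ℤ) (n m : ℕ)
    (ha : ‖x - (a : ℚ_[p]) / (p:ℚ_[p])^n‖ ≤ 1) (hb : ‖x - (b : ℚ_[p]) / (p:ℚ_[p])^m‖ ≤ 1) :
    Complex.exp (2 * Real.pi * Complex.I * ((a:ℂ) / (p:ℂ)^n)) =
      Complex.exp (2 * Real.pi * Complex.I * ((b:ℂ) / (p:ℂ)^m)) := by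
  have hp0 : (p:ℚ_[p]) ≠ 0 := Nat.cast_ne_zero.mpr hp.out.ne_zero
  have hpc : (p:ℂ) ≠ 0 := Nat.cast_ne_zero.mpr hp.out.ne_zero
  set d : ℤ := a * p^m - b * p^n with hd
  have hdq : (d : ℚ_[p]) = ((a : ℚ_[p]) / (p:ℚ_[p])^n - (b : ℚ_[p]) / (p:ℚ_[p])^m) * (p:ℚ_[p])^(n+m) := by
    rw [hd]
    field_simp [hd]
    push_cast
    ring
  have hnorm : ‖(d : ℚ_[p])‖ ≤ (p:ℝ) ^ (-(n+m) : ℤ) := by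
    rw [hdq, norm_mul, Padic.norm_p_pow]
    have h1 : ‖(a : ℚ_[p]) / (p:ℚ_[p])^n - (b : ℚ_[p]) / (p:ℚ_[p])^m‖ ≤ 1 := by
      calc ‖(a : ℚ_[p]) / (p:ℚ_[p])^n - (b : ℚ_[p]) / (p:ℚ_[p])^m‖
          = ‖(x - (b : ℚ_[p]) / (p:ℚ_[p])^m) + -(x - (a : ℚ_[p]) / (p:ℚ_[p])^n)‖ := by ring_nf
        _ ≤ max ‖x - (b : ℚ_[p]) / (p:ℚ_[p])^m‖ ‖-(x - (a : ℚ_[p]) / (p:ℚ_[p])^n)‖ :=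
            Padic.nonarchimedean _ _
        _ ≤ 1 := by rw [norm_neg]; exact max_le hb ha
    calc ‖(a : ℚ_[p]) / (p:ℚ_[p])^n - (b : ℚ_[p]) / (p:ℚ_[p])^m‖ * (p:ℝ) ^ (-(n+m) : ℤ)
        ≤ 1 * (p:ℝ) ^ (-(n+m) : ℤ) := by
          apply mul_le_mul_of_nonneg_right h1 (by positivity)
      _ = _ := one_mul _
  obtain ⟨k, hk⟩ := (Padic.norm_int_le_pow_iff_dvd d (n+m)).mp hnorm
  have hkc : (a:ℂ) / (p:ℂ)^n = (b:ℂ) / (p:ℂ)^m + k := by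
    have : (d:ℂ) = ((p:ℂ)^(n+m)) * k := by exact_mod_cast congrArg (Int.cast : ℤ → ℂ) hk
    rw [hd] at this
    field_simp [hd] at this ⊢
    push_cast at this ⊢
    linear_combination this
  rw [hkc, mul_add, Complex.exp_add]
  have : Complex.exp (2 * Real.pi * Complex.I * (k:ℂ)) = 1 := by
    rw [show 2 * Real.pi * Complex.I * (k:ℂ) = (k:ℤ) * (2 * Real.pi * Complex.I) by push_cast; ring]
    exact Complex.exp_int_mul_two_pi_mul_I k
  rw [this, mul_one]

lemma stdChar_eq_exp (p : ℕ) [hp : Fact p.Prime] (x : ℚ_[p]) (a : ℤ) (n : ℕ)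
    (h : ‖x - (a : ℚ_[p]) / (p:ℚ_[p])^n‖ ≤ 1) :
    stdChar p x = Complex.exp (2 * Real.pi * Complex.I * ((a:ℂ) / (p:ℂ)^n)) := by
  have hp0 : (p:ℚ_[p]) ≠ 0 := Nat.cast_ne_zero.mpr hp.out.ne_zero
  rw [stdChar]
  set n₀ : ℕ := (-x.valuation).toNat with hn₀
  set y : ℤ_[p] := ⟨(p : ℚ_[p]) ^ n₀ * x, by
    by_cases hx : x = 0
    · simp [hx]
    · rw [norm_mul, norm_pow, Padic.norm_p, Padic.norm_eq_zpow_neg_valuation hx]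
      have h1 : (1:ℝ) < p := by exact_mod_cast hp.out.one_lt
      have h0 : (0:ℝ) < p := by positivity
      rw [inv_pow, ← zpow_natCast, ← zpow_neg, ← zpow_add₀ (ne_of_gt h0)]
      apply zpow_le_one_of_nonpos₀ h1.le
      have h2 : -x.valuation ≤ ((-x.valuation).toNat : ℤ) := Int.self_le_toNat _
      omega⟩ with hy
  have key : ‖x - ((y.appr n₀ : ℤ) : ℚ_[p]) / (p:ℚ_[p])^n₀‖ ≤ 1 := by
    obtain ⟨z, hz⟩ := Ideal.mem_span_singleton'.mp (PadicInt.appr_spec n₀ y)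
    have hz' : (y : ℚ_[p]) - (y.appr n₀ : ℚ_[p]) = (z : ℚ_[p]) * (p:ℚ_[p])^n₀ := by
      exact_mod_cast congrArg (PadicInt.Coe.ringHom : ℤ_[p] →+* ℚ_[p]) hz.symm
    have hyx : (y : ℚ_[p]) = (p : ℚ_[p]) ^ n₀ * x := rfl
    have : x - ((y.appr n₀ : ℤ) : ℚ_[p]) / (p:ℚ_[p])^n₀ = (z : ℚ_[p]) := by
      field_simp
      push_cast at hz' ⊢
      linear_combination hz' - hyx
    rw [this]
    exact z.norm_le_one
  have := exp_rep_eq p x ((y.appr n₀ : ℤ)) a n₀ n key h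
  simpa using this


section helpers
variable (p : ℕ) [hp : Fact p.Prime]

lemma mem_int_of_le (x : ℚ_[p]) (n : ℕ) (hn : (-x.valuation).toNat ≤ n) :
    ‖(p : ℚ_[p]) ^ n * x‖ ≤ 1 := by
  by_cases hx : x = 0
  · simp [hx]
  · rw [norm_mul, norm_pow, Padic.norm_p, Padic.norm_eq_zpow_neg_valuation hx]
    have h1 : (1:ℝ) < p := by exact_mod_cast hp.out.one_lt
    have h0 : (0:ℝ) < p := by positivity
    rw [inv_pow, ← zpow_natCast, ← zpow_neg, ← zpow_add₀ (ne_of_gt h0)]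
    apply zpow_le_one_of_nonpos₀ h1.le
    have h2 : -x.valuation ≤ ((-x.valuation).toNat : ℤ) := Int.self_le_toNat _
    omega

lemma rep_of_appr (w : ℚ_[p]) (n : ℕ) (h : ‖(p:ℚ_[p])^n * w‖ ≤ 1) :
    ‖w - (((PadicInt.appr ⟨(p:ℚ_[p])^n * w, h⟩ n : ℤ) : ℚ_[p])) / (p:ℚ_[p])^n‖ ≤ 1 := by
  have hp0 : (p:ℚ_[p]) ≠ 0 := Nat.cast_ne_zero.mpr hp.out.ne_zero
  set y : ℤ_[p] := ⟨(p:ℚ_[p])^n * w, h⟩ with hy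
  obtain ⟨z, hz⟩ := Ideal.mem_span_singleton'.mp (PadicInt.appr_spec n y)
  have hz' : (y : ℚ_[p]) - (y.appr n : ℚ_[p]) = (z : ℚ_[p]) * (p:ℚ_[p])^n := by
    exact_mod_cast congrArg (PadicInt.Coe.ringHom : ℤ_[p] →+* ℚ_[p]) hz.symm
  have hyx : (y : ℚ_[p]) = (p : ℚ_[p]) ^ n * w := rfl
  have : w - (((y.appr n : ℤ) : ℚ_[p])) / (p:ℚ_[p])^n = (z : ℚ_[p]) := by
    field_simp
    push_cast at hz' ⊢
    linear_combination hz' - hyx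
  rw [show (PadicInt.appr ⟨(p:ℚ_[p])^n * w, h⟩ n) = y.appr n from rfl, this]
  exact z.norm_le_one
end helpers


lemma coeff_periodic (p : ℕ) (hp : p.Prime) (M : ℕ) (P : ℚ[X])
    (hdeg : P.natDegree < p^(M+1)) (ζ : ℂ) (hζ : IsPrimitiveRoot ζ (p^(M+1)))
    (hroot : Polynomial.aeval ζ P = 0) (hP : P ≠ 0)
    (r j j' : ℕ) (hr : r < p^M) (hj : j < p) (hj' : j' < p) :
    P.coeff (r + j * p^M) = P.coeff (r + j' * p^M) := by
  set Φ : ℚ[X] := cyclotomic (p^(M+1)) ℚ with hΦ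
  have hmin : Φ = minpoly ℚ ζ := cyclotomic_eq_minpoly_rat hζ (pow_pos hp.pos _)
  have hdvd : Φ ∣ P := hmin ▸ minpoly.dvd ℚ ζ hroot
  obtain ⟨g, hg⟩ := hdvd
  have hΦ0 : Φ ≠ 0 := cyclotomic_ne_zero _ ℚ
  have hg0 : g ≠ 0 := fun h => hP (by simp [hg, h])
  have hΦdeg : Φ.natDegree = p^M * (p-1) := by
    rw [hΦ, natDegree_cyclotomic, Nat.totient_prime_pow hp (Nat.succ_pos M)]
    simp
  have hgdeg : g.natDegree < p^M := by
    have := natDegree_mul hΦ0 hg0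
    rw [← hg, hΦdeg] at this
    have hpN : p^(M+1) = p^M * (p-1) + p^M := by
      rw [pow_succ]
      have := hp.pos
      nlinarith [Nat.sub_add_cancel hp.one_lt.le]
    omega
  have hgeom : Φ = ∑ i ∈ Finset.range p, X ^ (p^M * i) * 1 := by
    rw [hΦ, cyclotomic_prime_pow_eq_geom_sum hp]
    congr 1
    ext i
    rw [← pow_mul, mul_one]
  have key : ∀ j, j < p → P.coeff (r + j * p^M) = g.coeff r := by
    intro j hj
    rw [hg, hgeom]
    rw [Finset.sum_mul]
    rw [finset_sum_coeff]
    rw [Finset.sum_eq_single j]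
    · rw [mul_one, mul_comm (X ^ (p^M * j)) g, coeff_mul_X_pow']
      rw [if_pos (by nlinarith)]
      congr 1
      rw [mul_comm]
      omega
    · intro i hi hij
      rw [mul_one, mul_comm (X ^ (p^M * i)) g, coeff_mul_X_pow']
      rcases lt_or_gt_of_ne hij with h | h
      · rw [if_pos (by nlinarith)]
        apply coeff_eq_zero_of_natDegree_lt
        have : p^M ≤ r + j * p^M - p^M * i := by
          have h1 : p^M * i + p^M ≤ j * p^M := by nlinarith
          omega
        omega
      · rw [if_neg]
        intro hcon
        nlinarith
    · intro hcon
      exact absurd (Finset.mem_range.mpr hj) hcon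
  rw [key j hj, key j' hj']

/-- If `C ⊂ ℚ_p` is finite, `ξ ≠ 0` and `∑_{c ∈ C} χ(ξ c) = 0`, then for every `c ∈ C`
there exists `c' ∈ C`, `c' ≠ c`, with `|c - c'|_p = p/|ξ|_p`. -/
theorem stmt4 (p : ℕ) [Fact p.Prime] (C : Finset ℚ_[p]) (ξ : ℚ_[p]) (hξ : ξ ≠ 0)
    (h : ∑ c ∈ C, stdChar p (ξ * c) = 0) :
    ∀ c ∈ C, ∃ c' ∈ C, c' ≠ c ∧ ‖c - c'‖ = p / ‖ξ‖ := by
  intro c hc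
  have hpp : p.Prime := Fact.out
  have hp1R : (1:ℝ) < p := by exact_mod_cast hpp.one_lt
  set M : ℕ := C.sup (fun x => (-(ξ * x).valuation).toNat) with hM
  set N : ℕ := M + 1 with hNdef
  have hle : ∀ x ∈ C, ‖(p:ℚ_[p])^N * (ξ * x)‖ ≤ 1 := by
    intro x hx
    apply mem_int_of_le p _ N
    exact le_trans (Finset.le_sup (f := fun x => (-(ξ * x).valuation).toNat) hx) (Nat.le_succ M)
  classical
  set a : ℚ_[p] → ℕ := fun x =>
    if h : ‖(p:ℚ_[p])^N * (ξ * x)‖ ≤ 1 then PadicInt.appr ⟨(p:ℚ_[p])^N * (ξ * x), h⟩ N else 0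
    with ha_def
  have ha_lt : ∀ x ∈ C, a x < p ^ N := by
    intro x hx
    simp only [ha_def, dif_pos (hle x hx)]
    exact PadicInt.appr_lt _ N
  have ha_rep : ∀ x ∈ C, ‖ξ * x - ((a x : ℤ) : ℚ_[p]) / (p:ℚ_[p])^N‖ ≤ 1 := by
    intro x hx
    simp only [ha_def, dif_pos (hle x hx)]
    exact rep_of_appr p (ξ * x) N (hle x hx)
  set ζ : ℂ := Complex.exp (2 * Real.pi * Complex.I / ((p^N : ℕ) : ℂ)) with hζdef
  have hζ : IsPrimitiveRoot ζ (p^N) := Complex.isPrimitiveRoot_exp _ (pow_ne_zero _ hpp.ne_zero)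
  have hchar : ∀ x ∈ C, stdChar p (ξ * x) = ζ ^ (a x) := by
    intro x hx
    rw [stdChar_eq_exp p (ξ*x) (a x) N (ha_rep x hx), hζdef, ← Complex.exp_nat_mul]
    congr 1
    push_cast
    ring
  set P : ℚ[X] := ∑ x ∈ C, X ^ (a x) with hPdef
  have hroot : Polynomial.aeval ζ P = 0 := by
    rw [hPdef, map_sum]
    simp only [map_pow, Polynomial.aeval_X]
    rw [← h]
    exact Finset.sum_congr rfl fun x hx => (hchar x hx).symm
  have hcoeff : ∀ k, P.coeff k = ((C.filter (fun x => k = a x)).card : ℚ) := by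
    intro k
    rw [hPdef, Polynomial.finset_sum_coeff]
    simp only [Polynomial.coeff_X_pow]
    rw [Finset.sum_boole]
  have hc_ne : P.coeff (a c) ≠ 0 := by
    rw [hcoeff]
    have hmem : c ∈ C.filter (fun x => a c = a x) := Finset.mem_filter.mpr ⟨hc, rfl⟩
    exact_mod_cast Finset.card_ne_zero_of_mem hmem
  have hPne : P ≠ 0 := fun h0 => hc_ne (by rw [h0]; simp)
  have hPdeg : P.natDegree < p ^ N := by
    rw [Polynomial.natDegree_lt_iff_degree_lt hPne]
    apply lt_of_le_of_lt (Polynomial.degree_sum_le _ _)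
    rw [Finset.sup_lt_iff (by exact_mod_cast WithBot.bot_lt_coe (p^N))]
    intro x hx
    rw [Polynomial.degree_X_pow]
    exact_mod_cast ha_lt x hx
  set r : ℕ := a c % p ^ M with hr_def
  set j : ℕ := a c / p ^ M with hj_def
  have hpM : 0 < p ^ M := pow_pos hpp.pos M
  have hac : a c = r + j * p ^ M := by
    rw [hr_def, hj_def, mul_comm]
    exact (Nat.mod_add_div (a c) (p^M)).symm
  have hj : j < p := by
    rw [hj_def]
    apply Nat.div_lt_of_lt_mul
    calc a c < p ^ N := ha_lt c hc
      _ = p ^ M * p := by rw [hNdef, pow_succ]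
  have hr : r < p ^ M := Nat.mod_lt _ hpM
  set j' : ℕ := (j + 1) % p with hj'_def
  have hj' : j' < p := Nat.mod_lt _ hpp.pos
  have hjj' : j' ≠ j := by
    rcases Nat.lt_or_ge (j + 1) p with hlt | hge
    · rw [hj'_def, Nat.mod_eq_of_lt hlt]; omega
    · have : j + 1 = p := by omega
      rw [hj'_def, ← this, Nat.mod_self]
      have := hpp.two_le
      omega
  have hbcoeff := coeff_periodic p hpp M P hPdeg ζ hζ hroot hPne r j j' hr hj hj'
  set b : ℕ := r + j' * p ^ M with hb_def
  have hbne : P.coeff b ≠ 0 := by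
    rw [← hbcoeff, ← hac]
    exact hc_ne
  rw [hcoeff] at hbne
  have hfil : (C.filter (fun x => b = a x)).Nonempty := by
    rw [← Finset.card_pos]
    by_contra hcon
    exact hbne (by simp [Nat.eq_zero_of_not_pos hcon])
  obtain ⟨c', hc'⟩ := hfil
  obtain ⟨hc'C, hc'a⟩ := Finset.mem_filter.mp hc'
  have hane : a c' ≠ a c := by
    rw [← hc'a, hb_def, hac]
    intro e
    have : j' = j := Nat.eq_of_mul_eq_mul_right hpM (by omega)
    exact hjj' this
  have hne : c' ≠ c := fun e => hane (by rw [e])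
  -- norm computation
  set t : ℤ := (a c : ℤ) - (a c' : ℤ) with ht_def
  have ht : (t : ℚ_[p]) = (((j:ℤ) - j' : ℤ) : ℚ_[p]) * (p:ℚ_[p])^M := by
    rw [ht_def, ← hc'a, hac, hb_def]
    push_cast
    ring
  have hpd : ¬ ((p:ℤ) ∣ ((j:ℤ) - j')) := by
    rintro ⟨k, hk⟩
    have h1 : (j:ℤ) < p := by exact_mod_cast hj
    have h2 : (j':ℤ) < p := by exact_mod_cast hj'
    have h3 : (0:ℤ) ≤ j := Int.ofNat_nonneg j
    have h4 : (0:ℤ) ≤ j' := Int.ofNat_nonneg j'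
    have h5 : (j:ℤ) ≠ (j':ℤ) := by exact_mod_cast Ne.symm hjj'
    have hp0 : (0:ℤ) < p := by exact_mod_cast hpp.pos
    rcases lt_trichotomy k 0 with hk0 | hk0 | hk0
    · nlinarith
    · rw [hk0] at hk; omega
    · nlinarith
  have hnjj : ‖(((j:ℤ) - j' : ℤ) : ℚ_[p])‖ = 1 := by
    rcases lt_or_eq_of_le (Padic.norm_int_le_one (p := p) ((j:ℤ) - (j':ℤ))) with hlt | heq
    · exact absurd (Padic.norm_intCast_lt_one_iff.mp hlt) hpd
    · exact heq
  have hq0 : (p:ℝ) ≠ 0 := by positivity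
  have key : ‖(t : ℚ_[p]) / (p:ℚ_[p])^N‖ = p := by
    rw [norm_div, ht, norm_mul, hnjj, one_mul, Padic.norm_p_pow,
      Padic.norm_p_pow, ← zpow_sub₀ hq0]
    rw [hNdef]
    rw [show (-(M:ℤ)) - (-((M+1 : ℕ) :ℤ)) = 1 by push_cast; ring]
    exact zpow_one _
  have hsplit : ξ * c - ξ * c' =
      ((ξ * c - ((a c : ℤ) : ℚ_[p]) / (p:ℚ_[p])^N) - (ξ * c' - ((a c' : ℤ) : ℚ_[p]) / (p:ℚ_[p])^N))
        + (t : ℚ_[p]) / (p:ℚ_[p])^N := by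
    rw [ht_def]
    push_cast
    ring
  have hu : ‖(ξ * c - ((a c : ℤ) : ℚ_[p]) / (p:ℚ_[p])^N) - (ξ * c' - ((a c' : ℤ) : ℚ_[p]) / (p:ℚ_[p])^N)‖ ≤ 1 := by
    calc ‖_ - _‖ = ‖(ξ * c - ((a c : ℤ) : ℚ_[p]) / (p:ℚ_[p])^N) + -(ξ * c' - ((a c' : ℤ) : ℚ_[p]) / (p:ℚ_[p])^N)‖ := by
          ring_nf
      _ ≤ max ‖ξ * c - ((a c : ℤ) : ℚ_[p]) / (p:ℚ_[p])^N‖ ‖-(ξ * c' - ((a c' : ℤ) : ℚ_[p]) / (p:ℚ_[p])^N)‖ :=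
          Padic.nonarchimedean _ _
      _ ≤ 1 := by rw [norm_neg]; exact max_le (ha_rep c hc) (ha_rep c' hc'C)
  have hvaln : ‖ξ * c - ξ * c'‖ = p := by
    rw [hsplit, Padic.add_eq_max_of_ne (by rw [key]; exact ne_of_lt (lt_of_le_of_lt hu hp1R)), key]
    exact max_eq_right (le_of_lt (lt_of_le_of_lt hu hp1R))
  refine ⟨c', hc'C, hne, ?_⟩
  have : ‖ξ‖ * ‖c - c'‖ = p := by
    rw [← norm_mul, mul_sub, hvaln]
  rw [eq_div_iff (by simpa using hξ)]
  linarith [this]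
end

section
/- Let p be a prime and Ω ⊂ ℚ_p a Borel set with 0 < m(Ω) < ∞. If (Ω, Λ) is a spectral pair (i.e. the characters {χ_λ : λ ∈ Λ} form an orthogonal basis of L²(Ω)), then Λ is uniformly discrete: there exists n₀ ∈ ℤ such that |λ - λ'|_p > p^{n₀} for all distinct λ, λ' ∈ Λ. -/
open MeasureTheory

noncomputable instance (p : ℕ) [Fact p.Prime] : MeasurableSpace ℚ_[p] := borel _
instance (p : ℕ) [Fact p.Prime] : BorelSpace ℚ_[p] := ⟨rfl⟩

/-- Haar measure on `ℚ_[p]`, normalized so that `ℤ_p` (the closed unit ball) has measure 1. -/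
noncomputable def haarQp (p : ℕ) [Fact p.Prime] : Measure ℚ_[p] :=
  Measure.addHaarMeasure
    ⟨⟨Metric.closedBall 0 1, isCompact_closedBall 0 1⟩,
      ⟨0, by
        rw [mem_interior_iff_mem_nhds]
        exact Metric.closedBall_mem_nhds 0 one_pos⟩⟩

section Helpers
variable {p : ℕ} [hp : Fact p.Prime]

lemma appr_congr (y₁ y₂ : ℤ_[p]) (n : ℕ) (h : (y₁ : ℚ_[p]) = y₂) :
    y₁.appr n = y₂.appr n := by
  congr 1; exact Subtype.ext h

lemma appr_eq_appr_of_norm_sub_le (n : ℕ) (y z : ℤ_[p])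
    (h : ‖y - z‖ ≤ (p : ℝ) ^ (-n : ℤ)) : y.appr n = z.appr n := by
  have hyn : ‖y - (y.appr n : ℤ_[p])‖ ≤ (p:ℝ)^(-n:ℤ) :=
    (PadicInt.norm_le_pow_iff_mem_span_pow _ n).2 (PadicInt.appr_spec n y)
  have hzn : ‖z - (z.appr n : ℤ_[p])‖ ≤ (p:ℝ)^(-n:ℤ) :=
    (PadicInt.norm_le_pow_iff_mem_span_pow _ n).2 (PadicInt.appr_spec n z)
  have key : ‖((((y.appr n : ℤ) - (z.appr n : ℤ)) : ℤ) : ℤ_[p])‖ ≤ (p:ℝ)^(-n:ℤ) := by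
    have heq : ((((y.appr n : ℤ) - (z.appr n : ℤ)) : ℤ) : ℤ_[p]) =
        ((y.appr n : ℤ_[p]) - y) + ((y - z) + (z - (z.appr n : ℤ_[p]))) := by push_cast; ring
    rw [heq]
    refine (PadicInt.nonarchimedean _ _).trans (max_le ?_ ?_)
    · simpa [norm_sub_rev] using hyn
    · exact (PadicInt.nonarchimedean _ _).trans (max_le h hzn)
  have hdvd : ((p:ℤ))^n ∣ ((y.appr n : ℤ) - z.appr n) := PadicInt.norm_int_le_pow_iff_dvd.1 key
  have h1 := PadicInt.appr_lt y n
  have h2 := PadicInt.appr_lt z n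
  have hcast : ((p:ℤ))^n = ((p^n : ℕ) : ℤ) := by push_cast; ring
  have := Int.eq_zero_of_abs_lt_dvd hdvd (by rw [hcast, abs_sub_lt_iff]; omega)
  omega

lemma norm_pn_mul_le_one (x : ℚ_[p]) : ‖(p : ℚ_[p]) ^ ((-x.valuation).toNat) * x‖ ≤ 1 := by
  by_cases hx : x = 0
  · simp [hx]
  · rw [norm_mul, norm_pow, Padic.norm_p, Padic.norm_eq_zpow_neg_valuation hx]
    have h1 : (1:ℝ) < p := by exact_mod_cast hp.out.one_lt
    have h0 : (0:ℝ) < p := by positivity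
    rw [inv_pow, ← zpow_natCast, ← zpow_neg, ← zpow_add₀ (ne_of_gt h0)]
    apply zpow_le_one_of_nonpos₀ h1.le
    have h2 : -x.valuation ≤ ((-x.valuation).toNat : ℤ) := Int.self_le_toNat _
    omega

lemma stdChar_eq (x : ℚ_[p]) (n : ℕ) (hne : (-x.valuation).toNat = n) (y : ℤ_[p])
    (hy : (y : ℚ_[p]) = (p : ℚ_[p]) ^ n * x) :
    stdChar p x =
      Complex.exp (2 * Real.pi * Complex.I * ((y.appr n : ℂ) / (p : ℂ) ^ n)) := by
  subst hne
  simp only [stdChar]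
  refine congrArg Complex.exp ?_
  refine congrArg (fun t : ℕ =>
    2 * Real.pi * Complex.I * ((t:ℂ) / (p:ℂ) ^ ((-x.valuation).toNat))) ?_
  exact appr_congr _ _ _ hy.symm

lemma stdChar_abs (x : ℚ_[p]) : ‖stdChar p x‖ = 1 := by
  obtain ⟨a, n, h⟩ : ∃ (a n : ℕ), stdChar p x
      = Complex.exp (2*Real.pi*Complex.I*((a:ℂ)/(p:ℂ)^n)) :=
    ⟨_, _, stdChar_eq x _ rfl ⟨_, norm_pn_mul_le_one x⟩ rfl⟩
  have harg : (2*Real.pi*Complex.I*((a:ℂ)/(p:ℂ)^n)) =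
      ((2*Real.pi*(a:ℝ)/(p:ℝ)^n : ℝ) : ℂ) * Complex.I := by push_cast; ring
  rw [h, harg, Complex.norm_exp_ofReal_mul_I]

lemma stdChar_of_norm_le_one {x : ℚ_[p]} (h : ‖x‖ ≤ 1) : stdChar p x = 1 := by
  have hn : (-x.valuation).toNat = 0 := by
    rcases eq_or_ne x 0 with rfl | hx
    · simp [Padic.valuation_zero]
    · have := (Padic.norm_le_one_iff_val_nonneg x).1 h
      omega
  rw [stdChar_eq x 0 hn ⟨x, by simpa using h⟩ (by simp)]
  have h0 : ∀ y : ℤ_[p], y.appr 0 = 0 := fun y => rfl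
  have h0' : ∀ t : ℕ, t = 0 → Complex.exp (2 * Real.pi * Complex.I * ((t : ℂ) / (p : ℂ) ^ 0)) = 1 := by
    rintro _ rfl; simp
  exact h0' _ (h0 _)

lemma stdChar_congr {a b : ℚ_[p]} (h : ‖a - b‖ ≤ 1) : stdChar p a = stdChar p b := by
  rcases le_or_gt ‖b‖ 1 with hb | hb
  · have ha : ‖a‖ ≤ 1 := by
      have h2 := Padic.nonarchimedean (a - b) b
      rw [sub_add_cancel] at h2
      exact h2.trans (max_le h hb)
    rw [stdChar_of_norm_le_one ha, stdChar_of_norm_le_one hb]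
  · have hab : ‖a‖ = ‖b‖ := by
      by_contra hne
      have hmax := Padic.add_eq_max_of_ne (q := a) (r := -b) (by simpa using hne)
      rw [← sub_eq_add_neg] at hmax
      rw [hmax] at h
      simp only [norm_neg] at h
      exact absurd ((le_max_right ‖a‖ ‖b‖).trans h) (not_le.2 hb)
    have hbne : b ≠ 0 := by
      intro h0; rw [h0, norm_zero] at hb; linarith
    have hane : a ≠ 0 := by
      intro h0; rw [h0, norm_zero] at hab; rw [← hab] at hb; linarith
    have h1 : (1:ℝ) < p := by exact_mod_cast hp.out.one_lt
    have hval : a.valuation = b.valuation := by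
      rw [Padic.norm_eq_zpow_neg_valuation hane, Padic.norm_eq_zpow_neg_valuation hbne] at hab
      have := zpow_right_injective₀ (by positivity : (0:ℝ) < p) (ne_of_gt h1) hab
      omega
    set n := (-a.valuation).toNat with hn
    have hnb : (-b.valuation).toNat = n := by rw [hn, hval]
    have hpb : ‖(p : ℚ_[p]) ^ n * b‖ ≤ 1 := by
      rw [← hnb]; exact norm_pn_mul_le_one b
    have hpa : ‖(p : ℚ_[p]) ^ n * a‖ ≤ 1 := by
      rw [hn]; exact norm_pn_mul_le_one a
    rw [stdChar_eq a n rfl ⟨(p : ℚ_[p]) ^ n * a, hpa⟩ rfl]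
    rw [stdChar_eq b n hnb ⟨(p : ℚ_[p]) ^ n * b, hpb⟩ rfl]
    have happr := appr_eq_appr_of_norm_sub_le n (⟨(p : ℚ_[p]) ^ n * a, hpa⟩ : ℤ_[p])
      ⟨(p : ℚ_[p]) ^ n * b, hpb⟩ ?_
    · rw [happr]
    · show ‖_‖ ≤ _
      rw [PadicInt.norm_def]
      show ‖(p : ℚ_[p])^n * a - (p : ℚ_[p])^n * b‖ ≤ _
      rw [show (p : ℚ_[p])^n * a - (p : ℚ_[p])^n * b
          = (p:ℚ_[p])^n * (a - b) from by ring]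
      rw [norm_mul, norm_pow, Padic.norm_p]
      calc ((p:ℝ)⁻¹)^n * ‖a - b‖ ≤ ((p:ℝ)⁻¹)^n * 1 := by
            apply mul_le_mul_of_nonneg_left h (by positivity)
        _ = (p:ℝ)^(-n : ℤ) := by rw [mul_one, inv_pow, ← zpow_natCast, ← zpow_neg]

lemma stdChar_continuous : Continuous (stdChar p) := by
  rw [continuous_iff_continuousAt]
  intro x
  have hev : stdChar p =ᶠ[nhds x] fun _ => stdChar p x := by
    filter_upwards [Metric.closedBall_mem_nhds x one_pos] with y hy
    exact stdChar_congr (by simpa [dist_eq_norm] using hy)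
  exact hev.continuousAt

end Helpers
/-- If `(Ω, Λ)` is a spectral pair in `ℚ_p` (the normalized characters `χ_λ`, `λ ∈ Λ`,
form an orthonormal basis of `L²(Ω)`), then `Λ` is uniformly discrete. -/

theorem stmt10 (p : ℕ) [Fact p.Prime] (Ω : Set ℚ_[p]) (hΩ : MeasurableSet Ω)
    (h0 : 0 < haarQp p Ω) (hfin : haarQp p Ω < ⊤) (Λ : Set ℚ_[p])
    (e : Λ → Lp ℂ 2 ((haarQp p).restrict Ω))
    (he : ∀ l : Λ, (e l : ℚ_[p] → ℂ) =ᵐ[(haarQp p).restrict Ω]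
      fun x => (((haarQp p Ω).toReal) ^ (-(2:ℝ)⁻¹) : ℝ) • stdChar p ((l : ℚ_[p]) * x))
    (horth : Orthonormal ℂ e)
    (hbasis : ⊤ ≤ (Submodule.span ℂ (Set.range e)).topologicalClosure) :
    ∃ n₀ : ℤ, ∀ l ∈ Λ, ∀ l' ∈ Λ, l ≠ l' → (p : ℝ) ^ n₀ < ‖l - l'‖ := by
  classical
  have hp1 : (1:ℝ) < p := by exact_mod_cast (Fact.out : p.Prime).one_lt
  -- choose a ball capturing more than half the measure of Ω
  have hmono : Monotone (fun k : ℕ => Ω ∩ Metric.closedBall (0:ℚ_[p]) ((p:ℝ)^k)) := by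
    intro i j hij
    exact Set.inter_subset_inter_right _
      (Metric.closedBall_subset_closedBall (pow_le_pow_right₀ hp1.le hij))
  have hunion : (⋃ k : ℕ, (Ω ∩ Metric.closedBall (0:ℚ_[p]) ((p:ℝ)^k))) = Ω := by
    apply Set.Subset.antisymm (Set.iUnion_subset fun k => Set.inter_subset_left)
    intro x hx
    obtain ⟨k, hk⟩ := pow_unbounded_of_one_lt ‖x‖ hp1
    exact Set.mem_iUnion.2 ⟨k, hx, by
      simpa [Metric.mem_closedBall, dist_eq_norm] using hk.le⟩
  have htend := tendsto_measure_iUnion_atTop (μ := haarQp p) hmono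
  rw [hunion] at htend
  have hhalf : (haarQp p) Ω / 2 < (haarQp p) Ω := ENNReal.half_lt_self h0.ne' hfin.ne
  obtain ⟨k, hk⟩ := (htend.eventually_const_lt hhalf).exists
  simp only [Function.comp_apply] at hk
  set B := Metric.closedBall (0:ℚ_[p]) ((p:ℝ)^k) with hB
  have hBm : MeasurableSet B := Metric.isClosed_closedBall.measurableSet
  set S := Ω ∩ B with hS
  have hSm : MeasurableSet S := hΩ.inter hBm
  have hSfin : (haarQp p) S ≠ ⊤ := ((measure_mono Set.inter_subset_left).trans_lt hfin).ne
  -- measure of the complement is small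
  have hdiff : (haarQp p) (Ω \ B) < (haarQp p) S := by
    have h1 : Ω \ B = Ω \ S := by rw [hS, Set.diff_self_inter]
    have h2 : (haarQp p) (Ω \ S) = (haarQp p) Ω - (haarQp p) S :=
      measure_diff Set.inter_subset_left hSm.nullMeasurableSet hSfin
    rw [h1, h2]
    calc (haarQp p) Ω - (haarQp p) S ≤ (haarQp p) Ω - (haarQp p) Ω / 2 := tsub_le_tsub_left hk.le _
      _ = (haarQp p) Ω / 2 := ENNReal.sub_half hfin.ne
      _ < (haarQp p) S := hk
  by_contra hcon
  push_neg at hcon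
  obtain ⟨l, hl, l', hl', hne, hle⟩ := hcon (-(k:ℤ))
  -- the integrand
  set G : ℚ_[p] → ℂ :=
    fun x => (starRingEnd ℂ) (stdChar p (l * x)) * stdChar p (l' * x) with hG
  have hGcont : Continuous G := by
    apply Continuous.mul
    · exact continuous_star.comp (stdChar_continuous.comp (continuous_const.mul continuous_id))
    · exact stdChar_continuous.comp (continuous_const.mul continuous_id)
  have hGnorm : ∀ x, ‖G x‖ = 1 := by
    intro x
    rw [hG]
    simp only [norm_mul, RCLike.norm_conj, stdChar_abs, mul_one]
  -- orthogonality yields vanishing integral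
  have hij : (⟨l, hl⟩ : Λ) ≠ ⟨l', hl'⟩ := fun hEq => hne (congrArg Subtype.val hEq)
  have h00 : (inner ℂ (e ⟨l, hl⟩) (e ⟨l', hl'⟩) : ℂ) = 0 := horth.2 hij
  rw [MeasureTheory.L2.inner_def] at h00
  set c : ℝ := (((haarQp p) Ω).toReal) ^ (-(2:ℝ)⁻¹) with hc
  have hcpos : 0 < c := Real.rpow_pos_of_pos (ENNReal.toReal_pos h0.ne' hfin.ne) _
  have h1 : ∫ x, (inner ℂ (e ⟨l, hl⟩ x) (e ⟨l', hl'⟩ x) : ℂ) ∂((haarQp p).restrict Ω)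
      = (c:ℂ)^2 * ∫ x, G x ∂((haarQp p).restrict Ω) := by
    rw [← MeasureTheory.integral_const_mul]
    apply integral_congr_ae
    filter_upwards [he ⟨l, hl⟩, he ⟨l', hl'⟩] with x hx hx'
    rw [hx, hx']
    simp only [RCLike.inner_apply, Complex.real_smul, map_mul, Complex.conj_ofReal, hG]
    ring
  rw [h1] at h00
  have hcne : ((c:ℂ))^2 ≠ 0 := by
    have : (c:ℂ) ≠ 0 := by exact_mod_cast hcpos.ne'
    exact pow_ne_zero 2 this
  have hI0 : ∫ x in Ω, G x ∂(haarQp p) = 0 := by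
    rcases mul_eq_zero.1 h00 with h | h
    · exact absurd h hcne
    · exact h
  -- integrability
  have hGint : IntegrableOn G Ω (haarQp p) := by
    have hfm : IsFiniteMeasure ((haarQp p).restrict Ω) :=
      ⟨by rw [Measure.restrict_apply_univ]; exact hfin⟩
    apply Integrable.mono' (integrable_const (1:ℝ)) hGcont.aestronglyMeasurable
    exact Filter.Eventually.of_forall fun x => (hGnorm x).le
  -- split the integral
  have hsplit := MeasureTheory.integral_inter_add_diff (μ := haarQp p) (s := Ω) (t := B)
    (f := G) hBm hGint
  -- on S the integrand is 1
  have hGS : Set.EqOn G (fun _ => (1:ℂ)) S := by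
    intro x hx
    have hxB : x ∈ B := hx.2
    have hxn : ‖x‖ ≤ (p:ℝ)^k := by
      simpa [hB, Metric.mem_closedBall, dist_eq_norm] using hxB
    have hsub : ‖l' * x - l * x‖ ≤ 1 := by
      rw [show l' * x - l * x = (l' - l) * x from by ring, norm_mul]
      calc ‖l' - l‖ * ‖x‖ ≤ (p:ℝ)^(-(k:ℤ)) * (p:ℝ)^(k:ℕ) := by
            apply mul_le_mul _ hxn (norm_nonneg _) (by positivity)
            rw [norm_sub_rev]; exact hle
        _ = 1 := by
            rw [← zpow_natCast (p:ℝ) k, ← zpow_add₀ (by positivity : (p:ℝ) ≠ 0)]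
            simp
    have hcc : stdChar p (l' * x) = stdChar p (l * x) := stdChar_congr hsub
    show G x = 1
    rw [hG]
    simp only [hcc]
    rw [mul_comm, Complex.mul_conj]
    rw [Complex.normSq_eq_norm_sq, stdChar_abs]
    norm_num
  have hSint : ∫ x in S, G x ∂(haarQp p) = (((haarQp p) S).toReal : ℂ) := by
    rw [setIntegral_congr_fun hSm hGS, setIntegral_const]
    simp [Measure.real]
  -- bound the remaining part
  have hrest : ‖∫ x in Ω \ B, G x ∂(haarQp p)‖ ≤ ((haarQp p) (Ω \ B)).toReal := by
    have := norm_setIntegral_le_of_norm_le_const (μ := haarQp p) (s := Ω \ B) (C := 1)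
      ((measure_mono Set.diff_subset).trans_lt hfin)
      (fun x _ => (hGnorm x).le)
    simpa [Measure.real] using this
  -- contradiction
  rw [← hS, hSint, hI0] at hsplit
  have hnegeq : (((haarQp p) S).toReal : ℂ) = -∫ x in Ω \ B, G x ∂(haarQp p) := by
    linear_combination hsplit
  have hnorm : ((haarQp p) S).toReal ≤ ((haarQp p) (Ω \ B)).toReal := by
    have h2 : ‖(((haarQp p) S).toReal : ℂ)‖ = ((haarQp p) S).toReal := by
      simp [Complex.norm_real, abs_of_nonneg ENNReal.toReal_nonneg]
    rw [← h2, hnegeq, norm_neg]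
    exact hrest
  have hlt : ((haarQp p) (Ω \ B)).toReal < ((haarQp p) S).toReal :=
    (ENNReal.toReal_lt_toReal (((measure_mono Set.diff_subset).trans_lt hfin).ne) hSfin).2 hdiff
  linarith
end
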